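/- The function x ↦ 1/sinc(x) = x/sin(x) is convex on the interval [0, π). -/

import Mathlib

open Real Set Filter Topology

noncomputable def gAux (x : ℝ) : ℝ := x * (1 + cos x ^ 2) - 2 * sin x * cos x

lemma gAux_hasDeriv (x : ℝ) :
    HasDerivAt gAux (sin x * (3 * sin x - 2 * x * cos x)) x := by
  have h : HasDerivAt (fun x : ℝ => x * (1 + cos x ^ 2) - 2 * sin x * cos x)
      (1 * (1 + cos x ^ 2) + x * (0 + 2 * cos x ^ 1 * (-sin x)) -
        (2 * cos x * cos x + 2 * sin x * (-sin x))) x := by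
    exact ((hasDerivAt_id x).mul ((hasDerivAt_const x 1).add
      ((Real.hasDerivAt_cos x).pow 2))).sub
      (((Real.hasDerivAt_sin x).const_mul 2).mul (Real.hasDerivAt_cos x))
  refine h.congr_deriv (Eq.symm ?_)
  have h2 := sin_sq_add_cos_sq x
  ring_nf
  nlinarith [sin_sq_add_cos_sq x]

lemma gAux_nonneg {x : ℝ} (hx : x ∈ Ioo 0 π) : 0 ≤ gAux x := by
  have hmono : MonotoneOn gAux (Icc 0 x) := by
    apply monotoneOn_of_deriv_nonneg (convex_Icc 0 x)
      (fun y _ => (gAux_hasDeriv y).differentiableAt.continuousAt.continuousWithinAt)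
      (fun y _ => (gAux_hasDeriv y).differentiableAt.differentiableWithinAt)
    intro y hy
    rw [interior_Icc] at hy
    rw [(gAux_hasDeriv y).deriv]
    have hyπ : y < π := hy.2.trans hx.2
    have hsy : 0 ≤ sin y := sin_nonneg_of_nonneg_of_le_pi hy.1.le hyπ.le
    apply mul_nonneg hsy
    rcases le_or_gt (cos y) 0 with hc | hc
    · nlinarith [mul_nonneg hy.1.le (neg_nonneg.2 hc)]
    · have hy2 : y < π / 2 := by
        by_contra h
        exact hc.not_ge (cos_nonpos_of_pi_div_two_le_of_le (not_lt.1 h) (by linarith))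
      have := Real.lt_tan hy.1 hy2
      rw [Real.tan_eq_sin_div_cos, lt_div_iff₀ hc] at this
      nlinarith
  have h0 : gAux 0 = 0 := by simp [gAux]
  have := hmono (left_mem_Icc.2 hx.1.le) (right_mem_Icc.2 hx.1.le) hx.1.le
  linarith [this]

noncomputable def FAux (x : ℝ) : ℝ := if x = 0 then 1 else x / Real.sin x

noncomputable def f1Aux (x : ℝ) : ℝ := (sin x - x * cos x) / sin x ^ 2

lemma isOpen_U : IsOpen {x : ℝ | sin x ≠ 0} :=
  isOpen_compl_singleton.preimage Real.continuous_sin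

lemma FAux_eq_on {x : ℝ} (hx : sin x ≠ 0) : FAux x = x / sin x := by
  have hx0 : x ≠ 0 := by rintro rfl; simp at hx
  simp [FAux, hx0]

lemma FAux_hasDeriv {x : ℝ} (hx : sin x ≠ 0) : HasDerivAt FAux (f1Aux x) x := by
  have h : HasDerivAt (fun y : ℝ => y / sin y)
      ((1 * sin x - x * cos x) / sin x ^ 2) x :=
    (hasDerivAt_id x).div (Real.hasDerivAt_sin x) hx
  rw [one_mul] at h
  apply h.congr_of_eventuallyEq
  filter_upwards [isOpen_U.mem_nhds hx] with y hy using FAux_eq_on hy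

lemma f1Aux_hasDeriv {x : ℝ} (hx : sin x ≠ 0) :
    HasDerivAt f1Aux (gAux x / sin x ^ 3) x := by
  have hnum : HasDerivAt (fun y : ℝ => sin y - y * cos y) (x * sin x) x := by
    have h : HasDerivAt (fun y : ℝ => sin y - y * cos y)
        (cos x - (1 * cos x + x * (-sin x))) x :=
      (Real.hasDerivAt_sin x).sub ((hasDerivAt_id x).mul (Real.hasDerivAt_cos x))
    convert h using 1; ring
  have hden : HasDerivAt (fun y : ℝ => sin y ^ 2) (2 * cos x * sin x) x := by
    have h := (Real.hasDerivAt_sin x).pow 2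
    refine h.congr_deriv (Eq.symm ?_); ring
  have h := hnum.div hden (pow_ne_zero 2 hx)
  refine h.congr_deriv (Eq.symm ?_)
  rw [gAux]
  field_simp
  linear_combination (-x) * (sin_sq_add_cos_sq x)

lemma deriv_FAux_eq {x : ℝ} (hx : sin x ≠ 0) :
    HasDerivAt (deriv FAux) (gAux x / sin x ^ 3) x := by
  apply (f1Aux_hasDeriv hx).congr_of_eventuallyEq
  filter_upwards [isOpen_U.mem_nhds hx] with y hy using (FAux_hasDeriv hy).deriv

lemma FAux_contAt_zero : ContinuousAt FAux 0 := by
  have hs : Tendsto (fun y : ℝ => sin y / y) (𝓝[≠] 0) (𝓝 1) := by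
    have h := (Real.hasDerivAt_sin 0)
    rw [hasDerivAt_iff_tendsto_slope] at h
    simp only [Real.cos_zero] at h
    refine h.congr' ?_
    filter_upwards [self_mem_nhdsWithin] with y hy
    simp [slope_def_field, Real.sin_zero, div_eq_div_iff]
  have hinv : Tendsto (fun y : ℝ => y / sin y) (𝓝[≠] 0) (𝓝 1) := by
    have := hs.inv₀ one_ne_zero
    simp only [inv_div, inv_one] at this
    exact this
  have hF : Tendsto FAux (𝓝[≠] 0) (𝓝 1) := by
    refine hinv.congr' ?_
    filter_upwards [self_mem_nhdsWithin] with y hy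
    have hy0 : y ≠ 0 := hy
    simp [FAux, hy0]
  unfold ContinuousAt
  have : FAux 0 = 1 := by simp [FAux]
  rw [this, ← nhdsNE_sup_pure]
  rw [tendsto_sup]
  exact ⟨hF, by rw [tendsto_pure_left]; intro s hs; exact mem_of_mem_nhds (this ▸ hs)⟩

theorem invSinc_convexOn :
    ConvexOn ℝ (Set.Ico (0 : ℝ) Real.pi)
      (fun x : ℝ => if x = 0 then 1 else x / Real.sin x) := by
  show ConvexOn ℝ (Set.Ico (0 : ℝ) Real.pi) FAux
  have hsin : ∀ x ∈ Ioo (0:ℝ) π, sin x ≠ 0 := fun x hx =>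
    (sin_pos_of_pos_of_lt_pi hx.1 hx.2).ne'
  apply convexOn_of_deriv2_nonneg (convex_Ico 0 π)
  · intro x hx
    rcases eq_or_ne x 0 with rfl | hx0
    · exact FAux_contAt_zero.continuousWithinAt
    · have hxI : x ∈ Ioo (0:ℝ) π := ⟨hx.1.lt_of_ne (Ne.symm hx0), hx.2⟩
      exact (FAux_hasDeriv (hsin x hxI)).differentiableAt.continuousAt.continuousWithinAt
  · rw [interior_Ico]
    exact fun x hx => (FAux_hasDeriv (hsin x hx)).differentiableAt.differentiableWithinAt
  · rw [interior_Ico]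
    exact fun x hx => (deriv_FAux_eq (hsin x hx)).differentiableAt.differentiableWithinAt
  · rw [interior_Ico]
    intro x hx
    have h := (deriv_FAux_eq (hsin x hx)).deriv
    show 0 ≤ deriv (deriv FAux) x
    rw [h]
    exact div_nonneg (gAux_nonneg hx) (pow_nonneg (sin_pos_of_pos_of_lt_pi hx.1 hx.2).le 3)
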